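/- Let L₈ be the 3-dimensional complex algebra with basis e₁, e₂, e₃ and nonzero products e₁e₃ = e₂, e₃e₃ = e₁. Then every automorphism of L₈ has matrix with rows (α₉², 0, α₃), (α₃α₉, α₉³, α₆), (0, 0, α₉) for some α₃, α₆, α₉ ∈ ℂ with α₉ ≠ 0, and conversely every such matrix defines an automorphism. -/

import Mathlib

/-- Multiplication of the algebra `L₈` on `ℂ³` (standard basis `e₁, e₂, e₃`),
with nonzero products `e₁e₃ = e₂`, `e₃e₃ = e₁`. -/
def mulL8 (a b : Fin 3 → ℂ) : Fin 3 → ℂ :=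
  ![a 2 * b 2, a 0 * b 2, 0]

/-- A linear map `g : L₈ → L₈` is an algebra automorphism iff its matrix with
respect to `(e₁,e₂,e₃)` has rows `(α₉², 0, α₃), (α₃α₉, α₉³, α₆), (0, 0, α₉)`
for some `α₃, α₆, α₉ ∈ ℂ` with `α₉ ≠ 0`. -/
theorem L8_automorphisms (g : (Fin 3 → ℂ) →ₗ[ℂ] (Fin 3 → ℂ)) :
    (Function.Bijective g ∧ ∀ x y : Fin 3 → ℂ, g (mulL8 x y) = mulL8 (g x) (g y)) ↔
    ∃ α₃ α₆ α₉ : ℂ, α₉ ≠ 0 ∧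
      LinearMap.toMatrix' g = !![α₉ ^ 2, 0, α₃; α₃ * α₉, α₉ ^ 3, α₆; 0, 0, α₉] := by
  constructor
  · rintro ⟨hbij, hmul⟩
    set v := g (Pi.single (2 : Fin 3) 1) with hv
    refine ⟨v 0, v 1, v 2, ?_, ?_⟩
    · intro h0
      have h1 : g (Pi.single (0 : Fin 3) 1) = 0 := by
        have := hmul (Pi.single (2:Fin 3) 1) (Pi.single (2:Fin 3) 1)
        have hm : mulL8 (Pi.single (2:Fin 3) 1) (Pi.single (2:Fin 3) 1)
            = Pi.single (0:Fin 3) 1 := by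
          funext i; fin_cases i <;> simp [mulL8]
        rw [hm] at this
        rw [this]
        funext i; fin_cases i <;> simp [mulL8, ← hv, h0]
      have := hbij.1 (h1.trans (map_zero g).symm)
      have h2 := congrFun this 0
      simp at h2
    · have he1 : g (Pi.single (0:Fin 3) 1) = ![v 2 * v 2, v 0 * v 2, 0] := by
        have := hmul (Pi.single (2:Fin 3) 1) (Pi.single (2:Fin 3) 1)
        have hm : mulL8 (Pi.single (2:Fin 3) 1) (Pi.single (2:Fin 3) 1)
            = Pi.single (0:Fin 3) 1 := by
          funext i; fin_cases i <;> simp [mulL8]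
        rw [hm] at this
        rw [this]; funext i; fin_cases i <;> simp [mulL8, ← hv]
      have he2 : g (Pi.single (1:Fin 3) 1) = ![0, v 2 * v 2 * v 2, 0] := by
        have := hmul (Pi.single (0:Fin 3) 1) (Pi.single (2:Fin 3) 1)
        have hm : mulL8 (Pi.single (0:Fin 3) 1) (Pi.single (2:Fin 3) 1)
            = Pi.single (1:Fin 3) 1 := by
          funext i; fin_cases i <;> simp [mulL8]
        rw [hm] at this
        rw [this, he1]; funext i; fin_cases i <;> simp [mulL8, ← hv]
      have hps : ∀ j : Fin 3, (fun j' : Fin 3 => if j' = j then (1:ℂ) else 0) = Pi.single j 1 := by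
        intro j; funext k; simp [Pi.single_apply]
      ext i j
      rw [LinearMap.toMatrix'_apply]
      fin_cases i <;> fin_cases j <;>
        simp [he1, he2, ← hv] <;> ring
  · rintro ⟨α₃, α₆, α₉, h9, hM⟩
    have hg : ∀ x, g x = (!![α₉ ^ 2, 0, α₃; α₃ * α₉, α₉ ^ 3, α₆; 0, 0, α₉]).mulVec x := by
      intro x
      rw [← hM, ← Matrix.toLin'_apply, Matrix.toLin'_toMatrix']
    constructor
    · have hdet : IsUnit (!![α₉ ^ 2, 0, α₃; α₃ * α₉, α₉ ^ 3, α₆; 0, 0, α₉]).det := by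
        simp [Matrix.det_fin_three]
        intro h; exact h9 h
      have hinv := Matrix.invertibleOfIsUnitDet _ hdet
      have := (Matrix.toLinearEquiv' _ hinv).bijective
      have heq : g = Matrix.toLin' (!![α₉ ^ 2, 0, α₃; α₃ * α₉, α₉ ^ 3, α₆; 0, 0, α₉]) := by
        refine LinearMap.ext fun x => ?_; rw [hg, Matrix.toLin'_apply]
      rw [heq]
      simpa [Matrix.toLinearEquiv', Matrix.toLin'_apply'] using this
    · intro x y
      funext i
      fin_cases i <;>
        simp [hg, mulL8, Matrix.mulVec, dotProduct, Fin.sum_univ_three] <;> ring
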